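/- Every real number can be written as the sum of two Liouville numbers. -/
import Mathlib

theorem real_eq_sum_two_liouville (x : ℝ) :
    ∃ b c : ℝ, Liouville b ∧ Liouville c ∧ x = b + c := by
  have h1 : ∀ᶠ b in residual ℝ, Liouville b := eventually_residual_liouville
  have h2 : ∀ᶠ b in residual ℝ, Liouville (x - b) := by
    have h1' := h1
    rw [← ((Homeomorph.neg ℝ).trans (Homeomorph.addLeft x)).residual_map_eq, Filter.eventually_map] at h1'
    refine h1'.mono fun b hb => ?_
    simpa [sub_eq_add_neg] using hb
  have hd : Dense {b | Liouville b ∧ Liouville (x - b)} :=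
    dense_of_mem_residual (h1.and h2)
  obtain ⟨b, hb, hxb⟩ := hd.nonempty
  exact ⟨b, x - b, hb, hxb, by ring⟩
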